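/- If A ⊆ ℝ is shift-compact, then there exists δ > 0 such that the interval [0, δ) is contained in d(A) = A − A; in particular every shift-compact set belongs to the class SW. -/
import Mathlib


open Filter Topology Pointwise

/-- `A ⊆ ℝ` is shift-compact. -/
def ShiftCompact (A : Set ℝ) : Prop :=
  ∀ z : ℕ → ℝ, Tendsto z atTop (𝓝 0) →
    ∃ a ∈ A, ∃ M : Set ℕ, M.Infinite ∧ ∀ m ∈ M, a + z m ∈ A

/-- **Theorem 3(ix), first inclusion.** If `A ⊆ ℝ` is shift-compact, then `[0, δ) ⊆ A - A`
for some `δ > 0`; in particular every shift-compact set is in `SW`. -/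
theorem SC_subset_SW (A : Set ℝ) (hA : ShiftCompact A) :
    ∃ δ : ℝ, 0 < δ ∧ Set.Ico 0 δ ⊆ A - A := by
  by_contra h
  push_neg at h
  have hsel : ∀ n : ℕ, ∃ t : ℝ, t ∈ Set.Ico (0:ℝ) (1 / (n + 1)) ∧ t ∉ A - A := by
    intro n
    have hpos : (0:ℝ) < 1 / (n + 1) := by positivity
    obtain ⟨t, ht, hnt⟩ := Set.not_subset.mp (h _ hpos)
    exact ⟨t, ht, hnt⟩
  choose t ht hnt using hsel
  have htend : Tendsto t atTop (𝓝 0) := by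
    have h0 : ∀ n, (0:ℝ) ≤ t n := fun n => (ht n).1
    have h1 : ∀ n, t n ≤ 1 / (n + 1) := fun n => le_of_lt (ht n).2
    have : Tendsto (fun n : ℕ => (1:ℝ) / (n + 1)) atTop (𝓝 0) :=
      tendsto_one_div_add_atTop_nhds_zero_nat
    exact squeeze_zero h0 h1 this
  obtain ⟨a, haA, M, hM, hMem⟩ := hA t htend
  obtain ⟨m, hm⟩ := hM.nonempty
  exact hnt m ⟨a + t m, hMem m hm, a, haA, by ring⟩
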